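/- In a locally cartesian closed category E, an object P is a choice object if and only if the functor (−)^P : E → E preserves covers. -/

import Mathlib

open CategoryTheory CategoryTheory.Limits

universe v u v₂ u₂

/-- A morphism is a cover if the only subobject of its codomain through which
it factors is the maximal one. -/
def IsCover {C : Type u} [Category.{v} C] {X Y : C} (f : Y ⟶ X) : Prop :=
  ∀ ⦃Z : C⦄ (m : Z ⟶ X) (g : Y ⟶ Z), Mono m → g ≫ m = f → IsIso m

/-- An object is projective (w.r.t. covers) if every cover onto it splits. -/
def CovProjective {C : Type u} [Category.{v} C] (P : C) : Prop :=
  ∀ ⦃X : C⦄ (q : X ⟶ P), IsCover q → ∃ s : P ⟶ X, s ≫ q = 𝟙 P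

/-- A category has enough projectives if every object is covered by a projective. -/
def HasEnoughCovProjectives (C : Type u) [Category.{v} C] : Prop :=
  ∀ X : C, ∃ (P : C) (q : P ⟶ X), CovProjective P ∧ IsCover q

/-- A regular category: finite limits, cover-mono factorizations,
and covers stable under pullback. -/
class RegularCat (C : Type u) [Category.{v} C] extends HasFiniteLimits C : Prop where
  factor : ∀ {X Y : C} (f : X ⟶ Y), ∃ (Z : C) (e : X ⟶ Z) (m : Z ⟶ Y),
    IsCover e ∧ Mono m ∧ e ≫ m = f
  pullback_cover : ∀ {X Y Z L : C} (f : X ⟶ Y) (g : Z ⟶ Y)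
    (p₁ : L ⟶ X) (p₂ : L ⟶ Z), IsPullback p₁ p₂ f g → IsCover f → IsCover p₂
open MonoidalCategory in
/-- P is a choice object: for every cover q : Y → X and arrow T ⊗ P → X there
is a cover T' → T and a map T' ⊗ P → Y making the evident square commute. -/
def ChoiceObject {E : Type u} [Category.{v} E] [CartesianMonoidalCategory E] (P : E) : Prop :=
  ∀ ⦃X Y : E⦄ (q : Y ⟶ X), IsCover q → ∀ (T : E) (h : T ⊗ P ⟶ X),
    ∃ (T' : E) (c : T' ⟶ T), IsCover c ∧
      ∃ k : T' ⊗ P ⟶ Y, k ≫ q = (c ⊗ₘ 𝟙 P) ≫ h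

open MonoidalCategory CartesianClosed in
lemma aux_cover_of_comp_cover {C : Type u} [Category.{v} C] {X Y Z : C}
    (u : Z ⟶ Y) (g : Y ⟶ X) (h : IsCover (u ≫ g)) : IsCover g := by
  intro W m v hm hcomp
  exact h m (u ≫ v) hm (by rw [Category.assoc, hcomp])


open MonoidalCategory CartesianClosed MonoidalClosed in
/-- In a locally cartesian closed regular category, an object P is a choice
object iff the functor (−)^P preserves covers. -/
theorem choiceObject_iff_exp_preserves_covers
    {E : Type u} [Category.{v} E] [RegularCat E] [CartesianMonoidalCategory E]
    [MonoidalClosed E]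
    (lcc : ∀ {X Y : E} (f : X ⟶ Y), (Over.pullback f).IsLeftAdjoint)
    (P : E) [Closed P] :
    ChoiceObject P ↔ ∀ {X Y : E} (q : Y ⟶ X), IsCover q → IsCover ((ihom P).map q) := by
  letI : BraidedCategory E := .ofCartesianMonoidalCategory
  constructor
  · -- Choice object ⇒ (−)^P preserves covers
    intro hch X Y q hq
    -- evaluation, with the tensor factors in the `ChoiceObject` order
    obtain ⟨T', c, hc, k, hk⟩ :=
      hch q hq (P ⟹ X) ((β_ (P ⟹ X) P).hom ≫ uncurry (𝟙 (P ⟹ X)))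
    have key : curry ((β_ P T').hom ≫ k) ≫ (ihom P).map q = c := by
      rw [← curry_natural_right]
      have : ((β_ P T').hom ≫ k) ≫ q
          = (𝟙 P ⊗ₘ c) ≫ uncurry (𝟙 (P ⟹ X)) := by
        rw [Category.assoc, hk]
        simp [tensorHom_id, id_tensorHom, BraidedCategory.braiding_naturality_right_assoc]
      rw [this, id_tensorHom, curry_natural_left, curry_uncurry, Category.comp_id]
    exact aux_cover_of_comp_cover _ _ (key ▸ hc)
  · -- (−)^P preserves covers ⇒ choice object
    intro hexp X Y q hq T h
    have hcov : IsCover ((ihom P).map q) := hexp q hq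
    set f : T ⟶ P ⟹ X := curry ((β_ P T).hom ≫ h) with hf
    have hpb : IsPullback (pullback.fst ((ihom P).map q) f) (pullback.snd ((ihom P).map q) f)
        ((ihom P).map q) f := IsPullback.of_hasPullback _ _
    refine ⟨pullback ((ihom P).map q) f, pullback.snd _ _,
      RegularCat.pullback_cover _ _ _ _ hpb hcov,
      (β_ _ P).hom ≫ uncurry (pullback.fst ((ihom P).map q) f), ?_⟩
    have : uncurry (pullback.fst ((ihom P).map q) f) ≫ q
        = (𝟙 P ⊗ₘ pullback.snd ((ihom P).map q) f) ≫ (β_ P T).hom ≫ h := by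
      rw [← uncurry_natural_right, pullback.condition, hf, id_tensorHom,
        uncurry_natural_left, uncurry_curry]
    rw [Category.assoc, this, id_tensorHom, ← Category.assoc,
      ← BraidedCategory.braiding_naturality_left, Category.assoc, ← tensorHom_id]
    simp
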